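/- For d ≥ 1, q ≥ 1, n ≥ 0, c > 0, ν > 0, there is a constant C such that for all t > 0, the weighted L^q norm of the translating Gaussian satisfies ‖ |x|^n exp(-(|x| - ct)²/(20νt)) ‖_{L^q(ℝ^d)} ≤ C t^{n/2 + d/(2q)} (1 + t)^{n/2 + (d-1)/(2q)}. -/

import Mathlib

open MeasureTheory Real Set
open scoped ENNReal

noncomputable section

lemma aux_bdd {m ε y : ℝ} (hm : 0 ≤ m) (hε : 0 < ε) (hy : 0 ≤ y) :
    y ^ m * rexp (-(ε * y ^ 2)) ≤ 1 + rexp (m ^ 2 / (4 * ε)) := by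
  rcases le_or_gt y 1 with h | h
  · have h1 : y ^ m ≤ 1 := Real.rpow_le_one hy h hm
    have h2 : rexp (-(ε * y ^ 2)) ≤ 1 := by
      rw [Real.exp_le_one_iff]
      nlinarith [sq_nonneg y]
    nlinarith [Real.exp_pos (m ^ 2 / (4 * ε)), Real.rpow_nonneg hy m, Real.exp_pos (-(ε * y ^ 2))]
  · have hy0 : 0 < y := lt_trans one_pos h
    have hlog : Real.log y ≤ y := (Real.log_le_sub_one_of_pos hy0).trans (by linarith)
    have h1 : y ^ m ≤ rexp (m * y) := by
      rw [Real.rpow_def_of_pos hy0]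
      exact Real.exp_le_exp.2 (by nlinarith)
    have h2 : y ^ m * rexp (-(ε * y ^ 2)) ≤ rexp (m * y - ε * y ^ 2) := by
      rw [Real.exp_sub, div_eq_mul_inv, ← Real.exp_neg]
      exact mul_le_mul_of_nonneg_right h1 (Real.exp_pos _).le
    refine h2.trans ?_
    have h3 : m * y - ε * y ^ 2 ≤ m ^ 2 / (4 * ε) := by
      rw [le_div_iff₀ (by positivity)]
      nlinarith [sq_nonneg (2 * ε * y - m)]
    nlinarith [Real.exp_le_exp.2 h3, Real.exp_pos (m ^ 2 / (4 * ε))]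

lemma aux_int {m b : ℝ} (hm : 0 ≤ m) (hb : 0 < b) :
    Integrable (fun s : ℝ => |s| ^ m * rexp (-(b * s ^ 2))) := by
  have hmeas : Measurable (fun s : ℝ => |s| ^ m * rexp (-(b * s ^ 2))) := by measurability
  have hint : Integrable (fun s : ℝ => (1 + rexp (m ^ 2 / (4 * (b / 2)))) *
      rexp (-(b / 2) * s ^ 2)) := (integrable_exp_neg_mul_sq (half_pos hb)).const_mul _
  refine hint.mono' hmeas.aestronglyMeasurable (Filter.Eventually.of_forall fun s => ?_)
  have h0 : (0:ℝ) ≤ |s| ^ m * rexp (-(b * s ^ 2)) := by positivity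
  rw [Real.norm_eq_abs, abs_of_nonneg h0]
  have key : |s| ^ m * rexp (-((b / 2) * s ^ 2)) ≤ 1 + rexp (m ^ 2 / (4 * (b / 2))) := by
    have := aux_bdd (y := |s|) hm (half_pos hb) (abs_nonneg s)
    simpa [sq_abs] using this
  have hsplit : rexp (-(b * s ^ 2)) = rexp (-((b / 2) * s ^ 2)) * rexp (-((b / 2) * s ^ 2)) := by
    rw [← Real.exp_add]; ring_nf
  rw [hsplit, ← mul_assoc]
  have : |s| ^ m * rexp (-(b / 2 * s ^ 2)) * rexp (-(b / 2 * s ^ 2)) ≤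
      (1 + rexp (m ^ 2 / (4 * (b / 2)))) * rexp (-(b / 2 * s ^ 2)) :=
    mul_le_mul_of_nonneg_right key (Real.exp_pos _).le
  simpa [neg_mul] using this

lemma aux_scale {m b : ℝ} (hm : 0 ≤ m) (hb : 0 < b) :
    ∫ s : ℝ, |s| ^ m * rexp (-(b * s ^ 2)) =
      b ^ (-((m + 1) / 2)) * ∫ s : ℝ, |s| ^ m * rexp (-(s ^ 2)) := by
  have hsb : (0:ℝ) < Real.sqrt b := Real.sqrt_pos.2 hb
  have h := Measure.integral_comp_mul_left (fun s : ℝ => |s| ^ m * rexp (-(s ^ 2))) (Real.sqrt b)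
  have heq : ∀ x : ℝ, |Real.sqrt b * x| ^ m * rexp (-((Real.sqrt b * x) ^ 2)) =
      Real.sqrt b ^ m * (|x| ^ m * rexp (-(b * x ^ 2))) := by
    intro x
    rw [abs_mul, abs_of_pos hsb, Real.mul_rpow hsb.le (abs_nonneg x), mul_pow,
      Real.sq_sqrt hb.le]
    ring
  simp only [heq] at h
  rw [integral_const_mul] at h
  have h2 : (∫ s : ℝ, |s| ^ m * rexp (-(b * s ^ 2))) =
      (Real.sqrt b ^ m)⁻¹ * (|(Real.sqrt b)⁻¹| • ∫ s : ℝ, |s| ^ m * rexp (-(s ^ 2))) := by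
    rw [← h]; field_simp
  rw [h2, smul_eq_mul, abs_of_pos (inv_pos.2 hsb), ← mul_assoc]
  congr 1
  rw [Real.sqrt_eq_rpow, ← Real.rpow_mul hb.le, ← Real.rpow_neg hb.le, ← Real.rpow_neg hb.le,
    ← Real.rpow_add hb]
  congr 1
  ring


lemma radial_bound (m a c : ℝ) (hm : 0 ≤ m) (ha : 0 < a) (hc : 0 < c) :
    ∃ K : ℝ, 0 < K ∧ ∀ t : ℝ, 0 < t →
      ∫ y in Ioi (0:ℝ), y ^ m * rexp (-(a / t * (y - c * t) ^ 2)) ≤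
        K * t ^ ((m + 1) / 2) * (1 + t) ^ (m / 2) := by
  set I1 := ∫ s : ℝ, |s| ^ m * rexp (-(s ^ 2)) with hI1def
  set I0 := ∫ s : ℝ, rexp (-(s ^ 2)) with hI0def
  have hI1 : 0 ≤ I1 := integral_nonneg fun s => by positivity
  have hI0 : 0 ≤ I0 := integral_nonneg fun s => by positivity
  set A : ℝ := a ^ (-((m + 1) / 2)) with hAdef
  set A0 : ℝ := a ^ (-((1:ℝ) / 2)) with hA0def
  have hA : 0 < A := Real.rpow_pos_of_pos ha _
  have hA0 : 0 < A0 := Real.rpow_pos_of_pos ha _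
  refine ⟨2 ^ m * (A * (I1 + 1) + c ^ m * A0 * (I0 + 1)), ?_, ?_⟩
  · apply mul_pos (Real.rpow_pos_of_pos two_pos m)
    have h1 : 0 < A * (I1 + 1) := mul_pos hA (by linarith)
    have h2 : 0 < c ^ m * A0 * (I0 + 1) := mul_pos (mul_pos (Real.rpow_pos_of_pos hc m) hA0) (by linarith)
    linarith
  intro t ht
  have hb : 0 < a / t := div_pos ha ht
  set b := a / t with hbdef
  set r := c * t with hrdef
  have hr : 0 < r := mul_pos hc ht
  -- integrable pieces
  have hf1 : Integrable (fun y : ℝ => |y - r| ^ m * rexp (-(b * (y - r) ^ 2))) :=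
    (aux_int hm hb).comp_sub_right r
  have hE0 : Integrable (fun s : ℝ => rexp (-(b * s ^ 2))) := by
    simpa [neg_mul] using integrable_exp_neg_mul_sq hb
  have hfE : Integrable (fun y : ℝ => rexp (-(b * (y - r) ^ 2))) := hE0.comp_sub_right r
  set h : ℝ → ℝ := fun y => 2 ^ m *
    (|y - r| ^ m * rexp (-(b * (y - r) ^ 2)) + r ^ m * rexp (-(b * (y - r) ^ 2))) with hhdef
  have hH : Integrable h := ((hf1.add (hfE.const_mul (r ^ m))).const_mul _)
  have hh0 : ∀ y, 0 ≤ h y := fun y => by positivity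
  -- pointwise bound on Ioi 0
  have hpt : ∀ y ∈ Ioi (0:ℝ), y ^ m * rexp (-(b * (y - r) ^ 2)) ≤ h y := by
    intro y hy
    have hy0 : (0:ℝ) < y := hy
    have key : y ^ m ≤ 2 ^ m * (|y - r| ^ m + r ^ m) := by
      have h1 : y ≤ |y - r| + r := by cases abs_cases (y - r) <;> linarith
      have h2 : y ^ m ≤ (|y - r| + r) ^ m := Real.rpow_le_rpow hy0.le h1 hm
      have h3 : (|y - r| + r) ^ m ≤ (2 * max (|y - r|) r) ^ m := by
        apply Real.rpow_le_rpow (by positivity) ?_ hm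
        rcases le_total (|y - r|) r with hle | hle
        · rw [max_eq_right hle]; linarith
        · rw [max_eq_left hle]; linarith
      have h4 : (2 * max (|y - r|) r) ^ m = 2 ^ m * max (|y - r|) r ^ m :=
        Real.mul_rpow (by norm_num) (le_max_iff.2 (Or.inr hr.le))
      have h5 : max (|y - r|) r ^ m ≤ |y - r| ^ m + r ^ m := by
        rcases max_cases (|y - r|) r with ⟨heq, _⟩ | ⟨heq, _⟩ <;> rw [heq]
        · nlinarith [Real.rpow_nonneg hr.le m]
        · nlinarith [Real.rpow_nonneg (abs_nonneg (y - r)) m]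
      calc y ^ m ≤ (|y - r| + r) ^ m := h2
        _ ≤ (2 * max (|y - r|) r) ^ m := h3
        _ = 2 ^ m * max (|y - r|) r ^ m := h4
        _ ≤ 2 ^ m * (|y - r| ^ m + r ^ m) :=
            mul_le_mul_of_nonneg_left h5 (Real.rpow_nonneg (by norm_num) m)
    calc y ^ m * rexp (-(b * (y - r) ^ 2))
        ≤ 2 ^ m * (|y - r| ^ m + r ^ m) * rexp (-(b * (y - r) ^ 2)) :=
          mul_le_mul_of_nonneg_right key (Real.exp_pos _).le
      _ = h y := by rw [hhdef]; ring
  -- integrability on Ioi 0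
  have hfInt : IntegrableOn (fun y : ℝ => y ^ m * rexp (-(b * (y - r) ^ 2))) (Ioi 0) := by
    refine (hH.integrableOn).mono' ?_ ?_
    · have m1 : Measurable fun y : ℝ => y ^ m := measurable_id.pow measurable_const
      have m2 : Measurable fun y : ℝ => rexp (-(b * (y - r) ^ 2)) :=
        ((((measurable_id.sub measurable_const).pow_const 2).const_mul b).neg).exp
      exact (m1.mul m2).aestronglyMeasurable
    · filter_upwards [ae_restrict_mem measurableSet_Ioi] with y hy
      have hy0 : (0:ℝ) < y := hy
      rw [Real.norm_eq_abs, abs_of_nonneg (by positivity)]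
      exact hpt y hy
  -- translation and scaling identities
  have hint1 : (∫ y : ℝ, |y - r| ^ m * rexp (-(b * (y - r) ^ 2))) = b ^ (-((m + 1) / 2)) * I1 := by
    rw [integral_sub_right_eq_self (fun s : ℝ => |s| ^ m * rexp (-(b * s ^ 2))) r]
    exact aux_scale hm hb
  have hint0 : (∫ y : ℝ, rexp (-(b * (y - r) ^ 2))) = b ^ (-((1:ℝ) / 2)) * I0 := by
    rw [integral_sub_right_eq_self (fun s : ℝ => rexp (-(b * s ^ 2))) r]
    have := aux_scale (le_refl 0) hb
    simpa [Real.rpow_zero] using this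
  have hbrw : ∀ e : ℝ, b ^ (-e) = a ^ (-e) * t ^ e := by
    intro e
    rw [hbdef, Real.div_rpow ha.le ht.le, Real.rpow_neg ht.le e]
    rw [div_inv_eq_mul]
  have hrm : r ^ m = c ^ m * t ^ m := Real.mul_rpow hc.le ht.le
  set T := t ^ ((m + 1) / 2) with hTdef
  set S := (1 + t) ^ (m / 2) with hSdef
  have hT : 0 ≤ T := Real.rpow_nonneg ht.le _
  have hS1 : (1:ℝ) ≤ S := Real.one_le_rpow (by linarith) (by positivity)
  have hts : t ^ m * t ^ ((1:ℝ) / 2) = T * t ^ (m / 2) := by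
    rw [hTdef, ← Real.rpow_add ht, ← Real.rpow_add ht]
    congr 1
    ring
  have htm : t ^ (m / 2) ≤ S := Real.rpow_le_rpow ht.le (by linarith) (by positivity)
  calc ∫ y in Ioi (0:ℝ), y ^ m * rexp (-(b * (y - r) ^ 2))
      ≤ ∫ y in Ioi (0:ℝ), h y := setIntegral_mono_on hfInt hH.integrableOn measurableSet_Ioi hpt
    _ ≤ ∫ y : ℝ, h y := setIntegral_le_integral hH (Filter.Eventually.of_forall hh0)
    _ = 2 ^ m * ((∫ y : ℝ, |y - r| ^ m * rexp (-(b * (y - r) ^ 2))) +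
          r ^ m * ∫ y : ℝ, rexp (-(b * (y - r) ^ 2))) := by
        rw [hhdef]
        rw [integral_const_mul]
        congr 1
        rw [integral_add hf1 (hfE.const_mul _), integral_const_mul]
    _ = 2 ^ m * (A * I1 * T + c ^ m * A0 * I0 * (T * t ^ (m / 2))) := by
        rw [hint1, hint0, hbrw, hbrw, hrm]
        rw [← hts]
        ring
    _ ≤ 2 ^ m * (A * (I1 + 1) * (T * S) + c ^ m * A0 * (I0 + 1) * (T * S)) := by
        have k1 : A * I1 * T ≤ A * (I1 + 1) * (T * S) := by
          apply mul_le_mul (by nlinarith) (le_mul_of_one_le_right hT hS1) hT (by positivity)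
        have k2 : c ^ m * A0 * I0 * (T * t ^ (m / 2)) ≤ c ^ m * A0 * (I0 + 1) * (T * S) := by
          apply mul_le_mul ?_ (mul_le_mul_of_nonneg_left htm hT) ?_ ?_
          · have h0 : (0:ℝ) ≤ c ^ m * A0 := by positivity
            nlinarith
          · exact mul_nonneg hT (Real.rpow_nonneg ht.le _)
          · positivity
        have := add_le_add k1 k2
        exact mul_le_mul_of_nonneg_left this (Real.rpow_nonneg (by norm_num) m)
    _ = 2 ^ m * (A * (I1 + 1) + c ^ m * A0 * (I0 + 1)) * T * S := by ring


lemma gauss_int {E : Type*} [NormedAddCommGroup E] [InnerProductSpace ℝ E]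
    [FiniteDimensional ℝ E] [MeasurableSpace E] [BorelSpace E] {δ : ℝ} (hδ : 0 < δ) :
    Integrable (fun x : E => rexp (-(δ * ‖x‖ ^ 2))) := by
  have h := (GaussianFourier.integrable_cexp_neg_mul_sq_norm_add (V := E)
    (b := (δ:ℂ)) (by simpa using hδ) 0 0).norm
  refine h.congr (Filter.Eventually.of_forall fun x => ?_)
  simp only [Complex.norm_exp]
  norm_num
  left
  norm_cast

/-- Weighted `L^q` bound for the translating Gaussian:
`‖ |x|^n exp(-(|x|-ct)²/(20νt)) ‖_{L^q(ℝ^d)} ≤ C t^{n/2+d/(2q)} (1+t)^{n/2+(d-1)/(2q)}`. -/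
theorem translating_gaussian_weighted_norm (d : ℕ) (hd : 1 ≤ d) (q n c ν : ℝ)
    (hq : 1 ≤ q) (hn : 0 ≤ n) (hc : 0 < c) (hν : 0 < ν) :
    ∃ C : ℝ, 0 < C ∧ ∀ t : ℝ, 0 < t →
      eLpNorm
          (fun x : EuclideanSpace ℝ (Fin d) =>
            ‖x‖ ^ n * exp (-(‖x‖ - c * t) ^ 2 / (20 * ν * t)))
          (ENNReal.ofReal q) volume ≤
        ENNReal.ofReal
          (C * t ^ (n / 2 + (d : ℝ) / (2 * q)) * (1 + t) ^ (n / 2 + ((d : ℝ) - 1) / (2 * q))) := by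
  have hq0 : (0:ℝ) < q := lt_of_lt_of_le one_pos hq
  have hd1 : (1:ℝ) ≤ (d:ℝ) := by exact_mod_cast hd
  set a : ℝ := q / (20 * ν) with hadef
  have ha : 0 < a := by positivity
  set m : ℝ := (d:ℝ) - 1 + n * q with hmdef
  have hm0 : 0 ≤ m := by nlinarith [mul_nonneg hn hq0.le]
  obtain ⟨K, hK, hrad⟩ := radial_bound m a c hm0 ha hc
  set E := EuclideanSpace ℝ (Fin d) with hEdef
  haveI : Nontrivial E := by
    apply Module.nontrivial_of_finrank_pos (R := ℝ)
    rw [finrank_euclideanSpace_fin]; omega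
  set dvol : ℝ := (d:ℝ) * (volume (Metric.ball (0:E) 1)).toReal with hdvoldef
  have hdvol : 0 < dvol := by
    apply mul_pos (by positivity)
    exact ENNReal.toReal_pos (Metric.measure_ball_pos volume _ one_pos).ne' measure_ball_lt_top.ne
  refine ⟨(dvol * K) ^ (1/q), Real.rpow_pos_of_pos (mul_pos hdvol hK) _, ?_⟩
  intro t ht
  set b : ℝ := a / t with hbdef
  have hb : 0 < b := div_pos ha ht
  set F : ℝ → ℝ := fun y => |y| ^ (n * q) * rexp (-(b * (y - c * t) ^ 2)) with hFdef
  -- pointwise identity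
  have hpt : ∀ x : E, ((‖(‖x‖ ^ n * rexp (-(‖x‖ - c * t) ^ 2 / (20 * ν * t)))‖₊ : ℝ≥0∞)) ^ q
      = ENNReal.ofReal (F ‖x‖) := by
    intro x
    have hfx0 : (0:ℝ) ≤ ‖x‖ ^ n * rexp (-(‖x‖ - c * t) ^ 2 / (20 * ν * t)) := by positivity
    rw [show ((‖(‖x‖ ^ n * rexp (-(‖x‖ - c * t) ^ 2 / (20 * ν * t)))‖₊ : ℝ≥0∞)) = ENNReal.ofReal _ from Real.enorm_eq_ofReal hfx0, ENNReal.ofReal_rpow_of_nonneg hfx0 hq0.le]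
    congr 1
    rw [hFdef]
    simp only [abs_of_nonneg (norm_nonneg x)]
    rw [Real.mul_rpow (Real.rpow_nonneg (norm_nonneg x) n) (Real.exp_pos _).le,
      ← Real.rpow_mul (norm_nonneg x), ← Real.exp_mul]
    congr 1
    rw [hbdef, hadef]
    field_simp
  have hmq : 0 ≤ n * q := mul_nonneg hn hq0.le
  have hFmeas : Measurable F := (measurable_abs.pow measurable_const).mul
    ((((measurable_id.sub measurable_const).pow_const 2).const_mul b).neg).exp
  set M : ℝ := (1 + rexp ((n * q) ^ 2 / (4 * (b / 4)))) * rexp (b * (c * t) ^ 2) with hMdef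
  have hGint : Integrable (fun x : E => F ‖x‖) := by
    have hgauss : Integrable (fun x : E => rexp (-(b / 4 * ‖x‖ ^ 2))) := gauss_int (by positivity)
    refine (hgauss.const_mul M).mono' (hFmeas.comp measurable_norm).aestronglyMeasurable
      (Filter.Eventually.of_forall fun x => ?_)
    have hy : (0:ℝ) ≤ ‖x‖ := norm_nonneg x
    have hF0 : 0 ≤ F ‖x‖ := by rw [hFdef]; positivity
    rw [Real.norm_eq_abs, abs_of_nonneg hF0]
    have key1 : rexp (-(b * (‖x‖ - c * t) ^ 2)) ≤
        rexp (b * (c * t) ^ 2) * rexp (-(b / 2 * ‖x‖ ^ 2)) := by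
      rw [← Real.exp_add]
      apply Real.exp_le_exp.2
      nlinarith [mul_nonneg hb.le (sq_nonneg (‖x‖ - 2 * (c * t)))]
    have key2 : ‖x‖ ^ (n * q) * rexp (-(b / 4 * ‖x‖ ^ 2)) ≤
        1 + rexp ((n * q) ^ 2 / (4 * (b / 4))) := aux_bdd hmq (by positivity) hy
    have hsplit : rexp (-(b / 2 * ‖x‖ ^ 2)) =
        rexp (-(b / 4 * ‖x‖ ^ 2)) * rexp (-(b / 4 * ‖x‖ ^ 2)) := by
      rw [← Real.exp_add]; ring_nf
    calc F ‖x‖ = ‖x‖ ^ (n * q) * rexp (-(b * (‖x‖ - c * t) ^ 2)) := by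
          rw [hFdef]; simp only [abs_of_nonneg hy]
      _ ≤ ‖x‖ ^ (n * q) * (rexp (b * (c * t) ^ 2) * rexp (-(b / 2 * ‖x‖ ^ 2))) :=
          mul_le_mul_of_nonneg_left key1 (Real.rpow_nonneg hy _)
      _ = (‖x‖ ^ (n * q) * rexp (-(b / 4 * ‖x‖ ^ 2))) * rexp (b * (c * t) ^ 2) *
            rexp (-(b / 4 * ‖x‖ ^ 2)) := by rw [hsplit]; ring
      _ ≤ (1 + rexp ((n * q) ^ 2 / (4 * (b / 4)))) * rexp (b * (c * t) ^ 2) *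
            rexp (-(b / 4 * ‖x‖ ^ 2)) := by
          apply mul_le_mul_of_nonneg_right
            (mul_le_mul_of_nonneg_right key2 (Real.exp_pos _).le) (Real.exp_pos _).le
      _ = M * rexp (-(b / 4 * ‖x‖ ^ 2)) := by rw [hMdef]
  have hmain : (∫⁻ x : E,
        (↑‖(‖x‖ ^ n * rexp (-(‖x‖ - c * t) ^ 2 / (20 * ν * t)))‖₊ : ℝ≥0∞) ^ q)
      = ENNReal.ofReal (∫ x : E, F ‖x‖) := by
    rw [lintegral_congr hpt]
    exact (ofReal_integral_eq_lintegral_ofReal hGint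
      (Filter.Eventually.of_forall fun x => by rw [hFdef]; positivity)).symm
  have hpolar : (∫ x : E, F ‖x‖) ≤ dvol * (K * t ^ ((m + 1) / 2) * (1 + t) ^ (m / 2)) := by
    rw [integral_fun_norm_addHaar (volume : Measure E) F, finrank_euclideanSpace_fin]
    simp only [nsmul_eq_mul, smul_eq_mul]
    have hradeq : (∫ y in Ioi (0:ℝ), y ^ (d - 1) * F y)
        = ∫ y in Ioi (0:ℝ), y ^ m * rexp (-(a / t * (y - c * t) ^ 2)) := by
      apply setIntegral_congr_fun measurableSet_Ioi
      intro y hy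
      have hy0 : (0:ℝ) < y := hy
      rw [hFdef]
      simp only
      rw [abs_of_pos hy0, ← Real.rpow_natCast y (d - 1), ← mul_assoc, ← Real.rpow_add hy0,
        ← hbdef]
      congr 2
      have hcast : ((d - 1 : ℕ) : ℝ) = (d:ℝ) - 1 := by
        have h := Nat.cast_sub hd (R := ℝ); simpa using h
      rw [hcast, hmdef]
    rw [hradeq, ← mul_assoc]
    exact mul_le_mul_of_nonneg_left (hrad t ht) hdvol.le
  have hp0 : (ENNReal.ofReal q) ≠ 0 := (ENNReal.ofReal_pos.mpr hq0).ne'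
  rw [eLpNorm_eq_lintegral_rpow_enorm_toReal hp0 ENNReal.ofReal_ne_top,
    ENNReal.toReal_ofReal hq0.le]
  calc (∫⁻ x : E,
        (↑‖(‖x‖ ^ n * rexp (-(‖x‖ - c * t) ^ 2 / (20 * ν * t)))‖₊ : ℝ≥0∞) ^ q) ^ (1 / q)
      = (ENNReal.ofReal (∫ x : E, F ‖x‖)) ^ (1 / q) := by rw [hmain]
    _ ≤ (ENNReal.ofReal ((dvol * K) * t ^ ((m + 1) / 2) * (1 + t) ^ (m / 2))) ^ (1 / q) := by
        apply ENNReal.rpow_le_rpow _ (by positivity)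
        apply ENNReal.ofReal_le_ofReal
        calc (∫ x : E, F ‖x‖) ≤ dvol * (K * t ^ ((m + 1) / 2) * (1 + t) ^ (m / 2)) := hpolar
          _ = (dvol * K) * t ^ ((m + 1) / 2) * (1 + t) ^ (m / 2) := by ring
    _ = ENNReal.ofReal (((dvol * K) * t ^ ((m + 1) / 2) * (1 + t) ^ (m / 2)) ^ (1 / q)) :=
        ENNReal.ofReal_rpow_of_nonneg (by positivity) (by positivity)
    _ = ENNReal.ofReal ((dvol * K) ^ (1 / q) * t ^ (n / 2 + (d : ℝ) / (2 * q)) *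
          (1 + t) ^ (n / 2 + ((d : ℝ) - 1) / (2 * q))) := by
        congr 1
        rw [Real.mul_rpow (by positivity) (by positivity),
          Real.mul_rpow (by positivity) (by positivity),
          ← Real.rpow_mul ht.le, ← Real.rpow_mul (by linarith : (0:ℝ) ≤ 1 + t)]
        congr 2
        · rw [hmdef]; field_simp; ring
        · rw [hmdef]; field_simp; ring

end
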